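/- Let h ∈ ℕ and let f ∈ ℤ[[X]] be a formal power series of the form f = X^h · g where g has constant coefficient 1. Then there exists a unique sequence of integers c : {m ≥ 1} → ℤ such that f = X^h · ∏_{m ≥ 1} (1 − X^m)^{c(m)}, where the infinite product converges in the formal power series topology on ℤ[[X]] and (1 − X^m)^{c(m)} denotes the c(m)-th integer power of the unit 1 − X^m of ℤ[[X]]. -/

import Mathlib

open PowerSeries Finset Filter

noncomputable instance : TopologicalSpace (PowerSeries ℤ) :=
  inferInstanceAs (TopologicalSpace ((Unit →₀ ℕ) → ℤ))

theorem isUnit_one_sub_X_pow (m : ℕ) (hm : m ≠ 0) :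
    IsUnit (1 - PowerSeries.X ^ m : PowerSeries ℤ) := by
  rw [PowerSeries.isUnit_iff_constantCoeff]
  simp [zero_pow hm]

/-- `1 - X^m` as a unit of ℤ[[X]], for `m ≥ 1`. -/
noncomputable def oneSubXPow (m : {m : ℕ // 1 ≤ m}) : (PowerSeries ℤ)ˣ :=
  (isUnit_one_sub_X_pow m.1 (Nat.one_le_iff_ne_zero.mp m.2)).unit

lemma coe_oneSubXPow (m : {m : ℕ // 1 ≤ m}) :
    ((oneSubXPow m : (PowerSeries ℤ)ˣ) : PowerSeries ℤ) = 1 - PowerSeries.X ^ m.1 :=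
  IsUnit.unit_spec _

/-- The subgroup of units congruent to 1 mod `X^n`. -/
noncomputable def Kgrp (n : ℕ) : Subgroup (PowerSeries ℤ)ˣ where
  carrier := {v | (PowerSeries.X : PowerSeries ℤ) ^ n ∣ (v : PowerSeries ℤ) - 1}
  one_mem' := by simp
  mul_mem' := by
    intro a b ha hb
    have h : ((a * b : (PowerSeries ℤ)ˣ) : PowerSeries ℤ) - 1
        = (a : PowerSeries ℤ) * ((b : PowerSeries ℤ) - 1) + ((a : PowerSeries ℤ) - 1) := by
      push_cast; ring
    show (PowerSeries.X : PowerSeries ℤ) ^ n ∣ _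
    rw [h]
    exact dvd_add (Dvd.dvd.mul_left hb _) ha
  inv_mem' := by
    intro a ha
    have h : ((a⁻¹ : (PowerSeries ℤ)ˣ) : PowerSeries ℤ) - 1
        = (a⁻¹ : (PowerSeries ℤ)ˣ) * (1 - (a : PowerSeries ℤ)) := by
      rw [mul_sub, mul_one, Units.inv_mul]
    show (PowerSeries.X : PowerSeries ℤ) ^ n ∣ _
    rw [h]
    exact Dvd.dvd.mul_left (by simpa [neg_sub] using dvd_neg.2 ha) _

lemma mem_Kgrp {n : ℕ} {v : (PowerSeries ℤ)ˣ} :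
    v ∈ Kgrp n ↔ (PowerSeries.X : PowerSeries ℤ) ^ n ∣ (v : PowerSeries ℤ) - 1 := Iff.rfl

lemma oneSubXPow_mem (m : {m : ℕ // 1 ≤ m}) : oneSubXPow m ∈ Kgrp m.1 := by
  rw [mem_Kgrp, coe_oneSubXPow]
  have : (1 - PowerSeries.X ^ m.1 : PowerSeries ℤ) - 1 = -(PowerSeries.X ^ m.1) := by ring
  rw [this]
  exact dvd_neg.2 dvd_rfl

lemma Kgrp_mono {k n : ℕ} (h : k ≤ n) : Kgrp n ≤ Kgrp k := fun v hv =>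
  (pow_dvd_pow PowerSeries.X h).trans hv

lemma zpow_mem' (m : {m : ℕ // 1 ≤ m}) (c : ℤ) : oneSubXPow m ^ c ∈ Kgrp m.1 :=
  zpow_mem (oneSubXPow_mem m) c

lemma coeff_eq_of_mem {n : ℕ} {v : (PowerSeries ℤ)ˣ} (hv : v ∈ Kgrp n) {k : ℕ} (hk : k < n) :
    PowerSeries.coeff k ((v : PowerSeries ℤ) - 1) = 0 :=
  PowerSeries.X_pow_dvd_iff.1 hv k hk

lemma coeff_mul_sub_one {n : ℕ} (hn : 1 ≤ n) {a b : (PowerSeries ℤ)ˣ}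
    (ha : a ∈ Kgrp n) (hb : b ∈ Kgrp n) :
    PowerSeries.coeff n (((a * b : (PowerSeries ℤ)ˣ) : PowerSeries ℤ) - 1)
      = PowerSeries.coeff n ((a : PowerSeries ℤ) - 1)
        + PowerSeries.coeff n ((b : PowerSeries ℤ) - 1) := by
  have key : ((a * b : (PowerSeries ℤ)ˣ) : PowerSeries ℤ) - 1
      = ((a : PowerSeries ℤ) - 1) * ((b : PowerSeries ℤ) - 1)
        + (((a : PowerSeries ℤ) - 1) + ((b : PowerSeries ℤ) - 1)) := by
    push_cast; ring
  have h2 : PowerSeries.coeff n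
      (((a : PowerSeries ℤ) - 1) * ((b : PowerSeries ℤ) - 1)) = 0 := by
    have hd : (PowerSeries.X : PowerSeries ℤ) ^ (n + n) ∣
        ((a : PowerSeries ℤ) - 1) * ((b : PowerSeries ℤ) - 1) := by
      rw [pow_add]; exact mul_dvd_mul ha hb
    exact PowerSeries.X_pow_dvd_iff.1 hd n (by omega)
  rw [key, map_add, map_add, h2, zero_add]

lemma coeff_oneSubXPow (m : {m : ℕ // 1 ≤ m}) :
    PowerSeries.coeff m.1 ((oneSubXPow m : PowerSeries ℤ) - 1) = -1 := by
  rw [coe_oneSubXPow]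
  have : (1 - PowerSeries.X ^ m.1 : PowerSeries ℤ) - 1 = -(PowerSeries.X ^ m.1) := by ring
  rw [this, map_neg, PowerSeries.coeff_X_pow, if_pos rfl]

lemma coeff_oneSubXPow_inv (m : {m : ℕ // 1 ≤ m}) :
    PowerSeries.coeff m.1 ((((oneSubXPow m)⁻¹ : (PowerSeries ℤ)ˣ) : PowerSeries ℤ) - 1) = 1 := by
  have h0 := coeff_mul_sub_one m.2 (oneSubXPow_mem m) (inv_mem (oneSubXPow_mem m))
  rw [mul_inv_cancel, coeff_oneSubXPow m] at h0
  simp only [Units.val_one, sub_self, map_zero] at h0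
  linarith

lemma coeff_zpow (m : {m : ℕ // 1 ≤ m}) (c : ℤ) :
    PowerSeries.coeff m.1
      (((oneSubXPow m ^ c : (PowerSeries ℤ)ˣ) : PowerSeries ℤ) - 1) = -c := by
  induction c using Int.induction_on with
  | zero => simp
  | succ k ih =>
      rw [show ((k : ℤ) + 1) = (k : ℤ) + 1 from rfl, zpow_add_one,
        coeff_mul_sub_one m.2 (zpow_mem' m k) (oneSubXPow_mem m), ih, coeff_oneSubXPow m]
      push_cast; ring
  | pred k ih =>
      rw [zpow_sub_one,
        coeff_mul_sub_one m.2 (zpow_mem' m (-k)) (inv_mem (oneSubXPow_mem m)), ih,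
        coeff_oneSubXPow_inv m]
      push_cast; ring

lemma apply_eq_coeff (f : PowerSeries ℤ) (d : Unit →₀ ℕ) :
    f d = PowerSeries.coeff (d ()) f := by
  conv_lhs => rw [Finsupp.unique_single d]
  rfl

/-- Indices `≤ n`. -/
noncomputable def Tset (n : ℕ) : Finset {m : ℕ // 1 ≤ m} :=
  (Finset.range (n + 1)).subtype _

lemma mem_Tset {n : ℕ} {m : {m : ℕ // 1 ≤ m}} : m ∈ Tset n ↔ m.1 ≤ n := by
  simp [Tset, Nat.lt_succ_iff]

lemma prod_mem_Kgrp {s : Finset {m : ℕ // 1 ≤ m}} {c : {m : ℕ // 1 ≤ m} → ℤ} {n : ℕ}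
    (hs : ∀ m ∈ s, n ≤ m.1) : (∏ m ∈ s, oneSubXPow m ^ c m) ∈ Kgrp n :=
  Subgroup.prod_mem _ fun m hm => Kgrp_mono (hs m hm) (zpow_mem' m (c m))

lemma prod_coeff_stable (c : {m : ℕ // 1 ≤ m} → ℤ) (n : ℕ)
    {s : Finset {m : ℕ // 1 ≤ m}} (hs : Tset n ⊆ s) {k : ℕ} (hk : k ≤ n) :
    PowerSeries.coeff k
        (∏ m ∈ s, ((oneSubXPow m ^ c m : (PowerSeries ℤ)ˣ) : PowerSeries ℤ))
      = PowerSeries.coeff k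
        (∏ m ∈ Tset n, ((oneSubXPow m ^ c m : (PowerSeries ℤ)ˣ) : PowerSeries ℤ)) := by
  have hsplit : (∏ m ∈ s \ Tset n, oneSubXPow m ^ c m) * ∏ m ∈ Tset n, oneSubXPow m ^ c m
      = ∏ m ∈ s, oneSubXPow m ^ c m := Finset.prod_sdiff hs
  have hE : (∏ m ∈ s \ Tset n, oneSubXPow m ^ c m) ∈ Kgrp (n + 1) := by
    apply prod_mem_Kgrp
    intro m hm
    have := (Finset.mem_sdiff.1 hm).2
    rw [mem_Tset] at this
    omega
  have key : (∏ m ∈ s, ((oneSubXPow m ^ c m : (PowerSeries ℤ)ˣ) : PowerSeries ℤ))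
      - (∏ m ∈ Tset n, ((oneSubXPow m ^ c m : (PowerSeries ℤ)ˣ) : PowerSeries ℤ))
      = (∏ m ∈ Tset n, ((oneSubXPow m ^ c m : (PowerSeries ℤ)ˣ) : PowerSeries ℤ))
        * (((∏ m ∈ s \ Tset n, oneSubXPow m ^ c m : (PowerSeries ℤ)ˣ) : PowerSeries ℤ)
          - 1) := by
    have hsplit' : (∏ m ∈ s \ Tset n, ((oneSubXPow m ^ c m : (PowerSeries ℤ)ˣ) : PowerSeries ℤ))
        * ∏ m ∈ Tset n, ((oneSubXPow m ^ c m : (PowerSeries ℤ)ˣ) : PowerSeries ℤ)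
        = ∏ m ∈ s, ((oneSubXPow m ^ c m : (PowerSeries ℤ)ˣ) : PowerSeries ℤ) := by
      exact_mod_cast congrArg Units.val hsplit
    push_cast
    rw [← hsplit']
    ring
  have hdvd : (PowerSeries.X : PowerSeries ℤ) ^ (n + 1) ∣
      (∏ m ∈ s, ((oneSubXPow m ^ c m : (PowerSeries ℤ)ˣ) : PowerSeries ℤ))
      - (∏ m ∈ Tset n, ((oneSubXPow m ^ c m : (PowerSeries ℤ)ˣ) : PowerSeries ℤ)) := by
    rw [key]
    exact Dvd.dvd.mul_left hE _
  have h0 := PowerSeries.X_pow_dvd_iff.1 hdvd k (by omega)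
  rw [map_sub, sub_eq_zero] at h0
  exact h0

lemma hasProd_coeff {c : {m : ℕ // 1 ≤ m} → ℤ} {P : PowerSeries ℤ}
    (hP : HasProd (fun m : {m : ℕ // 1 ≤ m} =>
      ((oneSubXPow m ^ c m : (PowerSeries ℤ)ˣ) : PowerSeries ℤ)) P)
    {n k : ℕ} (hk : k ≤ n) :
    PowerSeries.coeff k P = PowerSeries.coeff k
      (∏ m ∈ Tset n, ((oneSubXPow m ^ c m : (PowerSeries ℤ)ˣ) : PowerSeries ℤ)) := by
  have h1 : Tendsto (fun s : Finset {m : ℕ // 1 ≤ m} =>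
      PowerSeries.coeff k
        (∏ m ∈ s, ((oneSubXPow m ^ c m : (PowerSeries ℤ)ˣ) : PowerSeries ℤ)))
      atTop (nhds (PowerSeries.coeff k P)) := by
    have h2 := (tendsto_pi_nhds.1 hP) (Finsupp.single () k)
    have e : ∀ q : PowerSeries ℤ, q (Finsupp.single () k) = PowerSeries.coeff k q := by
      intro q
      rw [apply_eq_coeff q, Finsupp.single_eq_same]
    simpa only [e, SummationFilter.unconditional_filter] using h2
  have h2 : Tendsto (fun s : Finset {m : ℕ // 1 ≤ m} =>
      PowerSeries.coeff k
        (∏ m ∈ s, ((oneSubXPow m ^ c m : (PowerSeries ℤ)ˣ) : PowerSeries ℤ)))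
      atTop (nhds (PowerSeries.coeff k
        (∏ m ∈ Tset n, ((oneSubXPow m ^ c m : (PowerSeries ℤ)ˣ) : PowerSeries ℤ)))) := by
    apply Tendsto.congr' _ tendsto_const_nhds
    filter_upwards [Filter.eventually_ge_atTop (Tset n)] with s hs
    exact (prod_coeff_stable c n hs hk).symm
  exact tendsto_nhds_unique h1 h2

lemma coeff_unit_mul {n : ℕ} {V : PowerSeries ℤ} (hV : PowerSeries.constantCoeff V = 1)
    {w : PowerSeries ℤ} (hw : (PowerSeries.X : PowerSeries ℤ) ^ n ∣ w) :
    PowerSeries.coeff n (V * w) = PowerSeries.coeff n w := by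
  obtain ⟨r, rfl⟩ := hw
  rw [show V * (PowerSeries.X ^ n * r) = PowerSeries.X ^ n * (V * r) by ring]
  have h1 := PowerSeries.coeff_X_pow_mul (V * r) n 0
  have h2 := PowerSeries.coeff_X_pow_mul r n 0
  rw [zero_add] at h1 h2
  rw [h1, h2]
  simp [hV]

noncomputable def Qseq (g : (PowerSeries ℤ)ˣ) : ℕ → (PowerSeries ℤ)ˣ
  | 0 => g
  | n + 1 => Qseq g n * oneSubXPow ⟨n + 1, Nat.le_add_left 1 n⟩
      ^ (PowerSeries.coeff (n + 1) ((Qseq g n : (PowerSeries ℤ)ˣ) : PowerSeries ℤ))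

noncomputable def cdef (g : (PowerSeries ℤ)ˣ) (m : {m : ℕ // 1 ≤ m}) : ℤ :=
  -(PowerSeries.coeff m.1 ((Qseq g (m.1 - 1) : (PowerSeries ℤ)ˣ) : PowerSeries ℤ))

lemma Qseq_mem (g : (PowerSeries ℤ)ˣ)
    (hg : PowerSeries.constantCoeff (g : PowerSeries ℤ) = 1) (n : ℕ) :
    Qseq g n ∈ Kgrp (n + 1) := by
  induction n with
  | zero =>
      rw [mem_Kgrp, pow_one, PowerSeries.X_dvd_iff, map_sub, show Qseq g 0 = g from rfl, hg]
      simp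
  | succ n ih =>
      have hz := zpow_mem' ⟨n + 1, Nat.le_add_left 1 n⟩
        (PowerSeries.coeff (n + 1) ((Qseq g n : (PowerSeries ℤ)ˣ) : PowerSeries ℤ))
      have hmem : Qseq g (n + 1) ∈ Kgrp (n + 1) := mul_mem ih hz
      rw [mem_Kgrp, PowerSeries.X_pow_dvd_iff]
      intro k hk
      rcases Nat.lt_or_ge k (n + 1) with hkn | hkn
      · exact coeff_eq_of_mem hmem hkn
      · have hk1 : k = n + 1 := by omega
        subst hk1
        show PowerSeries.coeff (n + 1)
          (((Qseq g n * _ : (PowerSeries ℤ)ˣ) : PowerSeries ℤ) - 1) = 0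
        rw [coeff_mul_sub_one (Nat.le_add_left 1 n) ih hz]
        rw [coeff_zpow ⟨n + 1, Nat.le_add_left 1 n⟩]
        rw [map_sub]
        simp

lemma Tset_succ (n : ℕ) :
    Tset (n + 1) = insert ⟨n + 1, Nat.le_add_left 1 n⟩ (Tset n) := by
  ext m
  simp only [mem_Tset, Finset.mem_insert]
  constructor
  · intro hm
    rcases Nat.lt_or_ge m.1 (n + 1) with h | h
    · exact Or.inr (by omega)
    · exact Or.inl (Subtype.ext (by simp; omega))
  · rintro (rfl | hm)
    · rfl
    · omega

lemma not_mem_Tset (n : ℕ) : (⟨n + 1, Nat.le_add_left 1 n⟩ : {m : ℕ // 1 ≤ m}) ∉ Tset n := by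
  rw [mem_Tset]; simp

lemma Qseq_prod (g : (PowerSeries ℤ)ˣ) (n : ℕ) :
    g = Qseq g n * ∏ m ∈ Tset n, oneSubXPow m ^ cdef g m := by
  induction n with
  | zero =>
      have hT : Tset 0 = ∅ := by
        ext m; simp only [mem_Tset, Finset.notMem_empty, iff_false]; omega
      rw [hT, Finset.prod_empty, mul_one]
      rfl
  | succ n ih =>
      rw [Tset_succ, Finset.prod_insert (not_mem_Tset n)]
      have hc : cdef g ⟨n + 1, Nat.le_add_left 1 n⟩
          = -(PowerSeries.coeff (n + 1) ((Qseq g n : (PowerSeries ℤ)ˣ) : PowerSeries ℤ)) := by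
        simp [cdef]
      rw [hc, zpow_neg]
      show g = Qseq g n * _ ^ _ * (_ * _)
      rw [show ∀ (q u p : (PowerSeries ℤ)ˣ), q * u * (u⁻¹ * p) = q * p from fun q u p => by group]
      exact ih

lemma main_hasProd (g : (PowerSeries ℤ)ˣ)
    (hg : PowerSeries.constantCoeff (g : PowerSeries ℤ) = 1) :
    HasProd (fun m : {m : ℕ // 1 ≤ m} =>
      ((oneSubXPow m ^ cdef g m : (PowerSeries ℤ)ˣ) : PowerSeries ℤ))
      (g : PowerSeries ℤ) := by
  rw [HasProd, SummationFilter.unconditional_filter]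
  apply tendsto_pi_nhds.2
  intro d
  set n := d () with hn
  apply Tendsto.congr' _ tendsto_const_nhds
  filter_upwards [Filter.eventually_ge_atTop (Tset n)] with s hs
  -- goal : (g : PowerSeries ℤ) d = (∏ m ∈ s, _) d
  rw [apply_eq_coeff (g : PowerSeries ℤ) d,
    apply_eq_coeff (∏ m ∈ s, ((oneSubXPow m ^ cdef g m : (PowerSeries ℤ)ˣ) : PowerSeries ℤ)) d,
    ← hn]
  rw [prod_coeff_stable (cdef g) n hs le_rfl]
  -- coeff n g = coeff n (∏ Tset n)
  have hprod := Qseq_prod g n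
  have hmem := Qseq_mem g hg n
  have key : (g : PowerSeries ℤ)
      - (∏ m ∈ Tset n, ((oneSubXPow m ^ cdef g m : (PowerSeries ℤ)ˣ) : PowerSeries ℤ))
      = (∏ m ∈ Tset n, ((oneSubXPow m ^ cdef g m : (PowerSeries ℤ)ˣ) : PowerSeries ℤ))
        * (((Qseq g n : (PowerSeries ℤ)ˣ) : PowerSeries ℤ) - 1) := by
    have h2 : (g : PowerSeries ℤ) = ((Qseq g n : (PowerSeries ℤ)ˣ) : PowerSeries ℤ)
        * ∏ m ∈ Tset n, ((oneSubXPow m ^ cdef g m : (PowerSeries ℤ)ˣ) : PowerSeries ℤ) := by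
      exact_mod_cast congrArg Units.val hprod
    rw [h2]; ring
  have hdvd : (PowerSeries.X : PowerSeries ℤ) ^ (n + 1) ∣ _ := key ▸
    (Dvd.dvd.mul_left (hmem : (PowerSeries.X : PowerSeries ℤ) ^ (n+1) ∣ _) _)
  have h0 := PowerSeries.X_pow_dvd_iff.1 hdvd n (by omega)
  rw [map_sub, sub_eq_zero] at h0
  exact h0

lemma unique_c (g : (PowerSeries ℤ)ˣ)
    (hg : PowerSeries.constantCoeff (g : PowerSeries ℤ) = 1)
    {c' : {m : ℕ // 1 ≤ m} → ℤ} {P' : PowerSeries ℤ}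
    (hP' : HasProd (fun m : {m : ℕ // 1 ≤ m} =>
      ((oneSubXPow m ^ c' m : (PowerSeries ℤ)ˣ) : PowerSeries ℤ)) P')
    (hPg : P' = (g : PowerSeries ℤ)) : c' = cdef g := by
  have hPd := main_hasProd g hg
  have main : ∀ n : ℕ, ∀ m : {m : ℕ // 1 ≤ m}, m.1 ≤ n → c' m = cdef g m := by
    intro n
    induction n with
    | zero => intro m hm; exact absurd (le_trans m.2 hm) (by omega)
    | succ n ih =>
        intro m hm
        rcases Nat.lt_or_ge m.1 (n + 1) with h | h
        · exact ih m (by omega)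
        · have hm1 : m = ⟨n + 1, Nat.le_add_left 1 n⟩ := Subtype.ext (by simp; omega)
          subst hm1
          set m₀ : {m : ℕ // 1 ≤ m} := ⟨n + 1, Nat.le_add_left 1 n⟩ with hm₀
          -- coefficients at n+1 of the two partial products agree
          have e1 := hasProd_coeff hP' (le_refl (n + 1))
          have e2 := hasProd_coeff hPd (le_refl (n + 1))
          rw [hPg] at e1
          rw [e1] at e2
          -- split off the top factor
          have hsame : (∏ m ∈ Tset n, oneSubXPow m ^ c' m)
              = ∏ m ∈ Tset n, oneSubXPow m ^ cdef g m := by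
            apply Finset.prod_congr rfl
            intro x hx
            rw [ih x (mem_Tset.1 hx)]
          set A : (PowerSeries ℤ)ˣ := ∏ m ∈ Tset n, oneSubXPow m ^ cdef g m with hA
          have p1 : (∏ m ∈ Tset (n + 1),
                ((oneSubXPow m ^ c' m : (PowerSeries ℤ)ˣ) : PowerSeries ℤ))
              = ((oneSubXPow m₀ ^ c' m₀ * A : (PowerSeries ℤ)ˣ) : PowerSeries ℤ) := by
            have : (∏ m ∈ Tset (n + 1), oneSubXPow m ^ c' m)
                = oneSubXPow m₀ ^ c' m₀ * A := by
              rw [Tset_succ, Finset.prod_insert (not_mem_Tset n), hsame]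
            exact_mod_cast congrArg Units.val this
          have p2 : (∏ m ∈ Tset (n + 1),
                ((oneSubXPow m ^ cdef g m : (PowerSeries ℤ)ˣ) : PowerSeries ℤ))
              = ((oneSubXPow m₀ ^ cdef g m₀ * A : (PowerSeries ℤ)ˣ) : PowerSeries ℤ) := by
            have : (∏ m ∈ Tset (n + 1), oneSubXPow m ^ cdef g m)
                = oneSubXPow m₀ ^ cdef g m₀ * A := by
              rw [Tset_succ, Finset.prod_insert (not_mem_Tset n)]
            exact_mod_cast congrArg Units.val this
          rw [p1, p2] at e2
          -- now deduce c' m₀ = cdef g m₀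
          set a := c' m₀
          set b := cdef g m₀
          set V : (PowerSeries ℤ)ˣ := oneSubXPow m₀ ^ b * A with hV
          have hVK : V ∈ Kgrp 1 := by
            apply mul_mem
            · exact Kgrp_mono m₀.2 (zpow_mem' m₀ b)
            · exact prod_mem_Kgrp fun x _ => x.2
          have hVc : PowerSeries.constantCoeff (V : PowerSeries ℤ) = 1 := by
            have h0 := coeff_eq_of_mem hVK (Nat.zero_lt_one)
            rw [map_sub, sub_eq_zero] at h0
            simpa using h0
          have hwK : oneSubXPow m₀ ^ (a - b) ∈ Kgrp (n + 1) := zpow_mem' m₀ (a - b)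
          have hw : (PowerSeries.X : PowerSeries ℤ) ^ (n + 1) ∣
              ((oneSubXPow m₀ ^ (a - b) : (PowerSeries ℤ)ˣ) : PowerSeries ℤ) - 1 := hwK
          have hdiff : ((oneSubXPow m₀ ^ a * A : (PowerSeries ℤ)ˣ) : PowerSeries ℤ)
              - ((oneSubXPow m₀ ^ b * A : (PowerSeries ℤ)ˣ) : PowerSeries ℤ)
              = (V : PowerSeries ℤ)
                * (((oneSubXPow m₀ ^ (a - b) : (PowerSeries ℤ)ˣ) : PowerSeries ℤ) - 1) := by
            have hba : b + (a - b) = a := by ring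
            have hu : oneSubXPow m₀ ^ a * A = V * (oneSubXPow m₀ ^ (a - b)) := by
              rw [hV, mul_right_comm, ← zpow_add, hba]
            rw [hu, hV]
            push_cast
            ring
          have hz : PowerSeries.coeff (n + 1)
              (((oneSubXPow m₀ ^ a * A : (PowerSeries ℤ)ˣ) : PowerSeries ℤ)
              - ((oneSubXPow m₀ ^ b * A : (PowerSeries ℤ)ˣ) : PowerSeries ℤ)) = 0 := by
            rw [map_sub, e2, sub_self]
          rw [hdiff, coeff_unit_mul hVc hw] at hz
          have := coeff_zpow m₀ (a - b)
          rw [show (m₀.1 : ℕ) = n + 1 from rfl] at this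
          rw [this] at hz
          have hab : a = b := by linarith
          exact hab
  funext m
  exact main m.1 m le_rfl

theorem stmt4 (h : ℕ) (f g : PowerSeries ℤ)
    (hg : PowerSeries.constantCoeff g = 1)
    (hf : f = PowerSeries.X ^ h * g) :
    ∃! c : {m : ℕ // 1 ≤ m} → ℤ,
      ∃ P : PowerSeries ℤ,
        HasProd (fun m : {m : ℕ // 1 ≤ m} =>
          ((oneSubXPow m ^ c m : (PowerSeries ℤ)ˣ) : PowerSeries ℤ)) P ∧
        f = PowerSeries.X ^ h * P := by
  have hgu : IsUnit g := by
    rw [PowerSeries.isUnit_iff_constantCoeff, hg]; exact isUnit_one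
  have hco : ((hgu.unit : (PowerSeries ℤ)ˣ) : PowerSeries ℤ) = g := hgu.unit_spec
  have hcc : PowerSeries.constantCoeff ((hgu.unit : (PowerSeries ℤ)ˣ) : PowerSeries ℤ) = 1 :=
    by rw [hco]; exact hg
  refine ⟨cdef hgu.unit, ⟨g, ?_, hf⟩, ?_⟩
  · have := main_hasProd hgu.unit hcc
    rwa [hco] at this
  · rintro c' ⟨P', hP', hfP'⟩
    have hPg : P' = g := by
      have heq : PowerSeries.X ^ h * g = PowerSeries.X ^ h * P' := by rw [← hf, hfP']
      exact (mul_left_cancel₀ (pow_ne_zero h PowerSeries.X_ne_zero) heq).symm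
    exact unique_c hgu.unit hcc hP' (hPg.trans hco.symm)
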